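/- Let p > q ≥ 1 be coprime integers and let r be the unique integer with 0 < r < p and q·r ≡ 1 (mod p). If the Hirzebruch–Jung continued fraction expansions are p/q = [x₁,…,x_m] and p/(p−r) = [y₁,…,y_k], then the concatenated continued fraction [x₁,…,x_m,1,y₁,…,y_k] evaluates to zero. -/

import Mathlib

/-- Hirzebruch–Jung continued fraction `[a₁,…,a_l] = a₁ - 1/(a₂ - 1/(⋯ - 1/a_l))`.
(With the junk value `hjcf [] = 0`, Lean's `1/0 = 0` convention gives `hjcf [a] = a`.) -/
noncomputable def hjcf : List ℝ → ℝ
  | [] => 0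
  | a :: l => a - 1 / hjcf l

@[simp] lemma hjcf_nil : hjcf [] = 0 := rfl

@[simp] lemma hjcf_cons (a : ℝ) (l : List ℝ) : hjcf (a :: l) = a - 1 / hjcf l := rfl

/-- The statement's `l.map (fun a => (a : ℝ))` elaborates via a monadic coercion;
this lemma converts it to the honest `List.map Int.cast l`. -/
lemma map_cast_eq (l : List ℤ) : (l.map (fun a => (a : ℝ)) : List ℝ) = List.map (Int.cast : ℤ → ℝ) l := by
  induction l with
  | nil => rfl
  | cons a t ih => simpa using ih

/-- Convergent data `(n, d, u, v)` for a HJ continued fraction, computed from the right. -/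
def cfn : List ℤ → ℤ × ℤ × ℤ × ℤ
  | [] => (1, 0, 0, -1)
  | a :: l =>
      (a * (cfn l).1 - (cfn l).2.1, (cfn l).1,
       a * (cfn l).2.2.1 - (cfn l).2.2.2, (cfn l).2.2.1)

lemma cfn_inv (l : List ℤ) (hl : ∀ a ∈ l, 2 ≤ a) :
    0 ≤ (cfn l).2.1 ∧ (cfn l).2.1 < (cfn l).1 ∧ 0 ≤ (cfn l).2.2.1 ∧
    (cfn l).2.2.2 ≤ (cfn l).2.2.1 ∧ (cfn l).2.2.1 < (cfn l).1 ∧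
    1 ≤ (cfn l).2.1 - (cfn l).2.2.2 ∧
    (cfn l).2.1 - (cfn l).2.2.2 ≤ (cfn l).1 - (cfn l).2.2.1 ∧
    (cfn l).2.2.1 * (cfn l).2.1 - (cfn l).1 * (cfn l).2.2.2 = 1 := by
  induction l with
  | nil => norm_num [cfn]
  | cons a t ih =>
    have ha : 2 ≤ a := hl a (by simp)
    obtain ⟨h1, h2, h3, h4, h5, h6, h7, h8⟩ := ih (fun b hb => hl b (by simp [hb]))
    simp only [cfn]
    refine ⟨by nlinarith, by nlinarith, by nlinarith, by nlinarith, by nlinarith,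
      by nlinarith, by nlinarith, by nlinarith⟩

lemma hjcf_eq (l : List ℤ) (hl : ∀ a ∈ l, 2 ≤ a) :
    hjcf (List.map (Int.cast : ℤ → ℝ) l) = ((cfn l).1 : ℝ) / ((cfn l).2.1 : ℝ) := by
  induction l with
  | nil => simp [cfn]
  | cons a t ih =>
    obtain ⟨h1, h2, h3, h4, h5, h6, h7, h8⟩ := cfn_inv t (fun b hb => hl b (by simp [hb]))
    have hn : (0 : ℝ) < ((cfn t).1 : ℝ) := by exact_mod_cast lt_of_le_of_lt h1 h2
    have hn' : ((cfn t).1 : ℝ) ≠ 0 := ne_of_gt hn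
    rw [List.map_cons, hjcf_cons, ih (fun b hb => hl b (by simp [hb]))]
    simp only [cfn]
    rw [one_div_div]
    push_cast
    field_simp

lemma cfn_lt_of_ssuffix (l₁ l₂ : List ℤ) (h : l₁ <:+ l₂) (hne : l₁ ≠ l₂)
    (hl : ∀ a ∈ l₂, 2 ≤ a) : (cfn l₁).1 < (cfn l₂).1 := by
  induction l₂ with
  | nil => simp at h; exact absurd h hne
  | cons b t ih =>
    have hb : 2 ≤ b := hl b (by simp)
    obtain ⟨h1, h2, h3, h4, h5, h6, h7, h8⟩ := cfn_inv t (fun c hc => hl c (by simp [hc]))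
    have hstep : (cfn t).1 < (cfn (b :: t)).1 := by
      simp only [cfn]; nlinarith
    rcases List.suffix_cons_iff.mp h with heq | hsuf
    · exact absurd heq hne
    · rcases eq_or_ne l₁ t with rfl | hne'
      · exact hstep
      · exact lt_trans (ih hsuf hne' (fun c hc => hl c (by simp [hc]))) hstep

theorem zero_continued_fraction_concat
    (p q r : ℕ) (hq : 1 ≤ q) (hpq : q < p) (hcop : Nat.Coprime p q)
    (hr0 : 0 < r) (hrp : r < p) (hmod : (q * r) % p = 1)
    (xs ys : List ℤ)
    (hxs : ∀ a ∈ xs, (2 : ℤ) ≤ a) (hys : ∀ a ∈ ys, (2 : ℤ) ≤ a)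
    (hx : hjcf (xs.map (fun a => (a : ℝ))) = (p : ℝ) / (q : ℝ))
    (hy : hjcf (ys.map (fun a => (a : ℝ))) = (p : ℝ) / ((p : ℝ) - (r : ℝ))) :
    hjcf (xs.map (fun a => (a : ℝ)) ++ (1 : ℝ) :: ys.map (fun a => (a : ℝ))) = 0 := by
  rw [map_cast_eq] at hx hy
  rw [map_cast_eq xs, map_cast_eq ys]
  have hp0 : 0 < p := lt_trans (lt_of_lt_of_le Nat.zero_lt_one hq) hpq
  have hpR : (0 : ℝ) < (p : ℝ) := by exact_mod_cast hp0
  have hpR' : (p : ℝ) ≠ 0 := ne_of_gt hpR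
  have hqR : (0 : ℝ) < (q : ℝ) := by exact_mod_cast lt_of_lt_of_le Nat.zero_lt_one hq
  have hprR : (0 : ℝ) < (p : ℝ) - (r : ℝ) := by
    have : (r : ℝ) < (p : ℝ) := by exact_mod_cast hrp
    linarith
  -- value of `1 :: ys`
  have h1y : hjcf ((1 : ℝ) :: List.map (Int.cast : ℤ → ℝ) ys) = (r : ℝ) / (p : ℝ) := by
    rw [hjcf_cons, hy, one_div_div]
    field_simp
    ring
  -- arithmetic identity from hmod
  have hqr : (q : ℤ) * r = (p : ℤ) * (((q * r) / p : ℕ) : ℤ) + 1 := by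
    have h := Nat.div_add_mod (q * r) p
    rw [hmod] at h
    exact_mod_cast (by omega : (q * r : ℕ) = p * ((q * r) / p) + 1)
  set k : ℤ := (((q * r) / p : ℕ) : ℤ) with hk
  have hcop_pr : IsCoprime ((p : ℤ)) ((r : ℤ)) := ⟨-k, q, by linear_combination hqr⟩
  have hcop_pq : IsCoprime ((p : ℤ)) ((q : ℤ)) := by
    rw [Int.isCoprime_iff_gcd_eq_one, Int.gcd_natCast_natCast]
    exact hcop
  -- identify cfn xs with (p, q, r, v)
  obtain ⟨h1, h2, h3, h4, h5, h6, h7, h8⟩ := cfn_inv xs hxs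
  have hxs_ne : xs ≠ [] := by
    intro h
    rw [h, List.map_nil, hjcf_nil] at hx
    have h2' := div_pos hpR hqR
    rw [← hx] at h2'
    exact lt_irrefl _ h2'
  have hd_pos : 0 < (cfn xs).2.1 := by
    cases xs with
    | nil => exact absurd rfl hxs_ne
    | cons a t =>
      obtain ⟨g1, g2, _⟩ := cfn_inv t (fun b hb => hxs b (by simp [hb]))
      simp only [cfn]
      linarith
  have hn_pos : 0 < (cfn xs).1 := lt_trans hd_pos h2
  have hdR : (0 : ℝ) < ((cfn xs).2.1 : ℝ) := by exact_mod_cast hd_pos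
  have hfrac : ((cfn xs).1 : ℝ) / ((cfn xs).2.1 : ℝ) = (p : ℝ) / (q : ℝ) := by
    rw [← hjcf_eq xs hxs]; exact hx
  have hcross : (cfn xs).1 * (q : ℤ) = (p : ℤ) * (cfn xs).2.1 := by
    have h := (div_eq_div_iff (ne_of_gt hdR) (ne_of_gt hqR)).mp hfrac
    exact_mod_cast h
  have hcop_nd : IsCoprime ((cfn xs).1) ((cfn xs).2.1) :=
    ⟨-(cfn xs).2.2.2, (cfn xs).2.2.1, by linear_combination h8⟩
  have hp_dvd_n : (p : ℤ) ∣ (cfn xs).1 :=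
    hcop_pq.dvd_of_dvd_mul_right ⟨(cfn xs).2.1, hcross⟩
  have hn_dvd_p : (cfn xs).1 ∣ (p : ℤ) :=
    hcop_nd.dvd_of_dvd_mul_left ⟨(q : ℤ), by linear_combination -hcross⟩
  have hn_eq : (cfn xs).1 = (p : ℤ) :=
    Int.dvd_antisymm (le_of_lt hn_pos) (by positivity) hn_dvd_p hp_dvd_n
  have hd_eq : (cfn xs).2.1 = (q : ℤ) := by
    have hpne : (p : ℤ) ≠ 0 := by positivity
    have h := hcross
    rw [hn_eq] at h
    exact (mul_left_cancel₀ hpne (by linear_combination h)).symm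
  -- identify u xs = r
  have hu_eq : (cfn xs).2.2.1 = (r : ℤ) := by
    have h8' := h8
    rw [hn_eq, hd_eq] at h8'
    have hdvd : (p : ℤ) ∣ ((cfn xs).2.2.1 - (r : ℤ)) * (q : ℤ) :=
      ⟨(cfn xs).2.2.2 - k, by linear_combination h8' - hqr⟩
    have hdvd2 : (p : ℤ) ∣ ((cfn xs).2.2.1 - (r : ℤ)) :=
      hcop_pq.dvd_of_dvd_mul_right hdvd
    obtain ⟨c, hc⟩ := hdvd2
    have hub : (cfn xs).2.2.1 < (p : ℤ) := by rw [← hn_eq]; exact h5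
    have hrb : (0 : ℤ) < (r : ℤ) := by exact_mod_cast hr0
    have hrb2 : (r : ℤ) < (p : ℤ) := by exact_mod_cast hrp
    have hpZ : (0 : ℤ) < (p : ℤ) := by exact_mod_cast hp0
    have hcl : (-1 : ℤ) < c := by
      have hh := (mul_lt_mul_iff_right₀ hpZ).mp (show (p : ℤ) * (-1) < (p : ℤ) * c by linarith)
      linarith
    have hcu : c < 1 := by
      have hh := (mul_lt_mul_iff_right₀ hpZ).mp (show (p : ℤ) * c < (p : ℤ) * 1 by linarith)
      linarith
    have hc0 : c = 0 := by omega
    rw [hc0, mul_zero] at hc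
    linarith
  -- main induction over suffixes of xs
  have key : ∀ s : List ℤ, s <:+ xs →
      hjcf (List.map (Int.cast : ℤ → ℝ) s ++ (1 : ℝ) :: List.map (Int.cast : ℤ → ℝ) ys)
        = (((cfn s).1 * (r : ℤ) - (cfn s).2.2.1 * (p : ℤ) : ℤ) : ℝ) /
          (((cfn s).2.1 * (r : ℤ) - (cfn s).2.2.2 * (p : ℤ) : ℤ) : ℝ) ∧
      ((cfn s).2.1 * (r : ℤ) - (cfn s).2.2.2 * (p : ℤ) ≠ 0) ∧
      (s ≠ xs → (cfn s).1 * (r : ℤ) - (cfn s).2.2.1 * (p : ℤ) ≠ 0) := by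
    intro s
    induction s with
    | nil =>
      intro _
      refine ⟨?_, ?_, ?_⟩
      · rw [List.map_nil, List.nil_append, h1y]
        simp [cfn]
      · simp only [cfn]
        intro hcon
        omega
      · intro _
        simp only [cfn]
        intro hcon
        omega
    | cons a t ih =>
      intro hsuf
      have hts : t <:+ xs := (List.suffix_cons a t).trans hsuf
      have htne : t ≠ xs := by
        intro h
        have hlen := hsuf.length_le
        rw [h] at hlen
        simp at hlen
      have ha2 : 2 ≤ a := hxs a (hsuf.subset List.mem_cons_self)
      obtain ⟨hval, hB, hA⟩ := ih hts
      have hA' : (cfn t).1 * (r : ℤ) - (cfn t).2.2.1 * (p : ℤ) ≠ 0 := hA htne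
      have hA0 : (((cfn t).1 * (r : ℤ) - (cfn t).2.2.1 * (p : ℤ) : ℤ) : ℝ) ≠ 0 :=
        Int.cast_ne_zero.mpr hA'
      have hA0' : ((cfn t).1 : ℝ) * (r : ℝ) - ((cfn t).2.2.1 : ℝ) * (p : ℝ) ≠ 0 := by
        push_cast at hA0; exact hA0
      refine ⟨?_, ?_, ?_⟩
      · rw [List.map_cons, List.cons_append, hjcf_cons, hval]
        simp only [cfn]
        rw [one_div_div]
        push_cast
        field_simp [hA0']
        have hD : ((r : ℝ) * ((cfn t).1 : ℝ) - (p : ℝ) * ((cfn t).2.2.1 : ℝ)) ≠ 0 := by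
          intro h; apply hA0'; linarith
        linear_combination (-(a : ℝ)) * mul_inv_cancel₀ hD
      · simp only [cfn]
        intro hcon
        exact hA' (by linear_combination hcon)
      · intro hne
        have hnlt : (cfn (a :: t)).1 < (p : ℤ) := by
          rw [← hn_eq]
          exact cfn_lt_of_ssuffix (a :: t) xs hsuf hne hxs
        obtain ⟨g1, g2, g3, g4, g5, g6, g7, g8⟩ :=
          cfn_inv (a :: t) (fun b hb => hxs b (hsuf.subset hb))
        have hn1 : 0 < (cfn (a :: t)).1 := lt_of_le_of_lt g1 g2
        intro hcon
        have hEq : (cfn (a :: t)).1 * (r : ℤ) = (cfn (a :: t)).2.2.1 * (p : ℤ) := by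
          linarith
        have hcop_nu : IsCoprime ((cfn (a :: t)).1) ((cfn (a :: t)).2.2.1) :=
          ⟨-(cfn (a :: t)).2.2.2, (cfn (a :: t)).2.1, by linear_combination g8⟩
        have hn_dvd : (cfn (a :: t)).1 ∣ (p : ℤ) :=
          hcop_nu.dvd_of_dvd_mul_left ⟨(r : ℤ), by linear_combination -hEq⟩
        have hp_dvd : (p : ℤ) ∣ (cfn (a :: t)).1 :=
          hcop_pr.dvd_of_dvd_mul_right ⟨(cfn (a :: t)).2.2.1, by linear_combination hEq⟩
        have hle := Int.le_of_dvd hn1 hp_dvd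
        omega
  obtain ⟨hval, _, _⟩ := key xs List.suffix_rfl
  rw [hval]
  have hz : (cfn xs).1 * (r : ℤ) - (cfn xs).2.2.1 * (p : ℤ) = 0 := by
    rw [hn_eq, hu_eq]; ring
  rw [hz]
  simp
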